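/- Let G = (S ∪ K, E) be a split graph with no isolated vertices, where S is an independent set and K is a clique, and let π = {V_1, V_2, ..., V_p} be a total transitive partition of G. If x ∈ S has deg(x) = 1 and y ∈ K is its unique neighbour (its support vertex), then neither x nor y can belong to V_t for any t ≥ 2; that is, x, y ∈ V_1. -/
import Mathlib


/-- A total transitive partition of `G` into `k` parts: the parts are nonempty, they
partition the vertex set, and `V_i` dominates `V_j` for all `i ≤ j`. -/
def TTPartition {V : Type*} (G : SimpleGraph V) (k : ℕ) (P : Fin k → Set V) : Prop :=
  (∀ i, (P i).Nonempty) ∧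
  (∀ v : V, ∃! i, v ∈ P i) ∧
  (∀ i j : Fin k, i ≤ j → ∀ v ∈ P j, ∃ u ∈ P i, G.Adj u v)

/-- In any total transitive partition of a split graph, a degree-one vertex `x ∈ S` and
its unique neighbour (support vertex) `y ∈ K` must both lie in the first part `V_1`,
i.e. neither can lie in `V_t` for `t ≥ 2`. -/
theorem stmt14 {V : Type*} [Fintype V] (G : SimpleGraph V)
    (S K : Set V) (hdisj : Disjoint S K) (hcover : S ∪ K = Set.univ)
    (hS : ∀ u ∈ S, ∀ v ∈ S, ¬ G.Adj u v)
    (hK : G.IsClique K)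
    (hiso : ∀ v : V, ∃ u : V, G.Adj v u)
    (p : ℕ) (P : Fin p → Set V) (hP : TTPartition G p P)
    (x y : V) (hx : x ∈ S) (hy : y ∈ K) (hxy : G.Adj x y)
    (huniq : ∀ z : V, G.Adj x z → z = y) :
    (∀ i : Fin p, x ∈ P i → (i : ℕ) = 0) ∧ (∀ i : Fin p, y ∈ P i → (i : ℕ) = 0) := by
  obtain ⟨hne, huniqP, hdom⟩ := hP
  obtain ⟨ix, hxix, hxuniq⟩ := huniqP x
  obtain ⟨iy, hyiy, hyuniq⟩ := huniqP y
  have hix0 : (ix : ℕ) = 0 := by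
    by_contra h
    have h1 : 1 ≤ (ix : ℕ) := Nat.one_le_iff_ne_zero.mpr h
    have hp : 1 < p := lt_of_le_of_lt h1 ix.isLt
    obtain ⟨u, hu, hadju⟩ := hdom ⟨0, by omega⟩ ix (by simp [Fin.le_def]) x hxix
    obtain ⟨v, hv, hadjv⟩ := hdom ⟨1, hp⟩ ix (by simp [Fin.le_def]; omega) x hxix
    have hu' : u = y := huniq u hadju.symm
    have hv' : v = y := huniq v hadjv.symm
    subst hu'; subst hv'
    have e0 := hyuniq _ hu
    have e1 := hyuniq _ hv
    have e2 := e0.trans e1.symm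
    exact absurd (congrArg Fin.val e2) (by simp)
  -- y is in P ix as well
  have hyix : y ∈ P ix := by
    obtain ⟨u, hu, hadju⟩ := hdom ix ix le_rfl x hxix
    have hu' : u = y := huniq u hadju.symm
    subst hu'; exact hu
  have hiy : iy = ix := (hyuniq ix hyix).symm
  constructor
  · intro i hi
    rw [hxuniq i hi]; exact hix0
  · intro i hi
    rw [hyuniq i hi, hiy]; exact hix0
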